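/- Let B ∈ ℂ^{n×q}, C ∈ ℂ^{k×n} and Q ∈ ℂ^{n×n} with Q = Q* be given. Then the following two statements are equivalent: (i) there exists a matrix K ∈ ℂ^{q×k} such that BKC + (BKC)* + Q is negative definite; (ii) both of the following hold: [for every nonzero x ∈ ℂ^n with B*x = 0 one has x*Qx < 0, OR BB* is positive definite] and [for every nonzero x ∈ ℂ^n with Cx = 0 one has x*Qx < 0, OR C*C is positive definite]. -/

import Mathlib

open Matrix ComplexOrder


lemma dot_adj {m p : ℕ} (A : Matrix (Fin m) (Fin p) ℂ) (x : Fin m → ℂ) (w : Fin p → ℂ) :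
    star x ⬝ᵥ (A *ᵥ w) = star (Aᴴ *ᵥ x) ⬝ᵥ w := by
  rw [star_mulVec, conjTranspose_conjTranspose, dotProduct_mulVec]

lemma re_dot_self_nonneg {m : ℕ} (z : Fin m → ℂ) : 0 ≤ (star z ⬝ᵥ z).re := by
  simp only [dotProduct, Pi.star_apply, Complex.re_sum]
  refine Finset.sum_nonneg fun i _ => ?_
  rw [Complex.star_def, mul_comm, Complex.mul_conj, Complex.ofReal_re]
  exact Complex.normSq_nonneg _

lemma dot_self_eq_zero_iff {m : ℕ} {z : Fin m → ℂ} (h : (star z ⬝ᵥ z).re = 0) : z = 0 := by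
  have : ∀ i ∈ Finset.univ, (Complex.normSq (z i) : ℝ) = 0 := by
    refine (Finset.sum_eq_zero_iff_of_nonneg (fun i _ => Complex.normSq_nonneg _)).mp ?_
    rw [← h]
    simp only [dotProduct, Pi.star_apply, Complex.re_sum]
    refine Finset.sum_congr rfl fun i _ => ?_
    rw [Complex.star_def, mul_comm, Complex.mul_conj, Complex.ofReal_re]
  funext i
  exact Complex.normSq_eq_zero.mp (this i (Finset.mem_univ i))

lemma herm_im {m : ℕ} {M : Matrix (Fin m) (Fin m) ℂ} (hM : Mᴴ = M) (x : Fin m → ℂ) :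
    (star x ⬝ᵥ (M *ᵥ x)).im = 0 := by
  have h1 : star (star x ⬝ᵥ (M *ᵥ x)) = star x ⬝ᵥ (M *ᵥ x) := by
    calc star (star x ⬝ᵥ (M *ᵥ x)) = star (M *ᵥ x) ⬝ᵥ star (star x) := by
          rw [star_dotProduct, star_star, star_star]
      _ = (star x ᵥ* Mᴴ) ⬝ᵥ x := by rw [star_mulVec, star_star]
      _ = star x ⬝ᵥ (Mᴴ *ᵥ x) := (dotProduct_mulVec _ _ _).symm
      _ = star x ⬝ᵥ (M *ᵥ x) := by rw [hM]
  rw [Complex.star_def] at h1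
  exact Complex.conj_eq_iff_im.mp h1


lemma pinv_exists {m : ℕ} {H : Matrix (Fin m) (Fin m) ℂ} (hH : H.PosSemidef) :
    ∃ P : Matrix (Fin m) (Fin m) ℂ, Pᴴ = P ∧ P.PosSemidef ∧ H * P * H = H ∧ P * H * P = P := by
  have hherm := hH.isHermitian
  set U : Matrix (Fin m) (Fin m) ℂ := (hherm.eigenvectorUnitary : Matrix (Fin m) (Fin m) ℂ) with hU
  set d : Fin m → ℝ := hherm.eigenvalues with hd
  have hUU : (star U) * U = 1 := Matrix.mem_unitaryGroup_iff'.mp hherm.eigenvectorUnitary.2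
  have hspec : H = U * diagonal (RCLike.ofReal ∘ d) * (star U) := hherm.spectral_theorem
  have key : ∀ a b : Fin m → ℂ, (U * diagonal a * star U) * (U * diagonal b * star U)
      = U * diagonal (a * b) * star U := by
    intro a b
    simp only [Matrix.mul_assoc]
    rw [← Matrix.mul_assoc (star U) U, hUU, Matrix.one_mul,
      ← Matrix.mul_assoc (diagonal a), diagonal_mul_diagonal]
    rfl
  set P : Matrix (Fin m) (Fin m) ℂ :=
    U * diagonal (RCLike.ofReal ∘ fun i => (d i)⁻¹) * (star U) with hP
  have hmul1 : (RCLike.ofReal ∘ d : Fin m → ℂ) * (RCLike.ofReal ∘ fun i => (d i)⁻¹)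
      * (RCLike.ofReal ∘ d) = (RCLike.ofReal ∘ d) := by
    funext i
    simp only [Pi.mul_apply, Function.comp_apply]
    rcases eq_or_ne (d i) 0 with h | h
    · simp [h]
    · push_cast
      field_simp
  have hmul2 : (RCLike.ofReal ∘ fun i => (d i)⁻¹ : Fin m → ℂ) * (RCLike.ofReal ∘ d)
      * (RCLike.ofReal ∘ fun i => (d i)⁻¹) = (RCLike.ofReal ∘ fun i => (d i)⁻¹) := by
    funext i
    simp only [Pi.mul_apply, Function.comp_apply]
    rcases eq_or_ne (d i) 0 with h | h
    · simp [h]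
    · push_cast
      field_simp
  have hstar : star (RCLike.ofReal ∘ fun i => (d i)⁻¹ : Fin m → ℂ)
      = (RCLike.ofReal ∘ fun i => (d i)⁻¹) := by
    funext i
    simp [Pi.star_apply, Complex.conj_ofReal]
  refine ⟨P, ?_, ?_, ?_, ?_⟩
  · rw [hP]
    simp only [star_eq_conjTranspose, conjTranspose_mul, conjTranspose_conjTranspose,
      diagonal_conjTranspose, hstar, Matrix.mul_assoc]
  · have hdiag : (diagonal (RCLike.ofReal ∘ fun i => (d i)⁻¹) : Matrix (Fin m) (Fin m) ℂ).PosSemidef := by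
      rw [posSemidef_diagonal_iff]
      intro i
      rw [RCLike.nonneg_iff]
      constructor
      · simp [inv_nonneg.mpr (hH.eigenvalues_nonneg i)]; exact hH.eigenvalues_nonneg i
      · simp
    have h2 : P = U * diagonal (RCLike.ofReal ∘ fun i => (d i)⁻¹) * Uᴴ := by
      rw [hP, star_eq_conjTranspose]
    rw [h2]
    exact hdiag.mul_mul_conjTranspose_same U
  · rw [hspec, hP, key, key, hmul1]
  · rw [hspec, hP, key, key, hmul2]





lemma quad_continuous {n : ℕ} (M : Matrix (Fin n) (Fin n) ℂ) :
    Continuous fun x : Fin n → ℂ => (star x ⬝ᵥ (M *ᵥ x)).re := by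
  refine Complex.continuous_re.comp ?_
  simp only [dotProduct, mulVec, dotProduct, Pi.star_apply]
  exact continuous_finset_sum _ fun i _ =>
    ((continuous_star.comp (continuous_apply i)).mul
      (continuous_finset_sum _ fun j _ => continuous_const.mul (continuous_apply j)))

lemma quad_scale {n : ℕ} (M : Matrix (Fin n) (Fin n) ℂ) (c : ℝ) (x : Fin n → ℂ) :
    (star ((c:ℂ) • x) ⬝ᵥ (M *ᵥ ((c:ℂ) • x))).re = c^2 * (star x ⬝ᵥ (M *ᵥ x)).re := by
  rw [star_smul, mulVec_smul, smul_dotProduct, dotProduct_smul]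
  simp only [smul_eq_mul, star_trivial, RCLike.star_def, Complex.conj_ofReal]
  rw [← mul_assoc, ← Complex.ofReal_mul, Complex.re_ofReal_mul, sq]

lemma finsler {n q : ℕ} (B : Matrix (Fin n) (Fin q) ℂ) (Q : Matrix (Fin n) (Fin n) ℂ)
    (hQ : Qᴴ = Q)
    (h : ∀ x : Fin n → ℂ, x ≠ 0 → Bᴴ *ᵥ x = 0 → (star x ⬝ᵥ (Q *ᵥ x)).re < 0) :
    ∃ ρ : ℝ, 0 < ρ ∧ (((ρ:ℂ) • (B * Bᴴ)) - Q).PosDef := by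
  set f : (Fin n → ℂ) → ℝ := fun x => (star x ⬝ᵥ (Q *ᵥ x)).re with hf
  set g : (Fin n → ℂ) → ℝ := fun x => (star x ⬝ᵥ ((B * Bᴴ) *ᵥ x)).re with hg
  have hfc : Continuous f := quad_continuous Q
  have hgc : Continuous g := quad_continuous (B * Bᴴ)
  have hgval : ∀ x, g x = (star (Bᴴ *ᵥ x) ⬝ᵥ (Bᴴ *ᵥ x)).re := by
    intro x
    show (star x ⬝ᵥ ((B * Bᴴ) *ᵥ x)).re = _
    rw [← mulVec_mulVec, dot_adj]
  have hg0 : ∀ x, 0 ≤ g x := fun x => (hgval x) ▸ re_dot_self_nonneg _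
  have hgker : ∀ x, g x = 0 → Bᴴ *ᵥ x = 0 := by
    intro x hx
    exact dot_self_eq_zero_iff ((hgval x) ▸ hx)
  -- key claim on the sphere
  have main : ∃ ρ : ℝ, 0 < ρ ∧ ∀ x : Fin n → ℂ, ‖x‖ = 1 → f x < ρ * g x := by
    set S := Metric.sphere (0 : Fin n → ℂ) 1 with hS
    have hScpt : IsCompact S := isCompact_sphere 0 1
    set T := S ∩ f ⁻¹' (Set.Ici 0) with hT
    have hTcpt : IsCompact T := hScpt.inter_right (isClosed_Ici.preimage hfc)
    rcases T.eq_empty_or_nonempty with hTe | hTne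
    · refine ⟨1, one_pos, fun x hx => ?_⟩
      have hxS : x ∈ S := by simpa [hS] using mem_sphere_zero_iff_norm.mpr hx
      have : x ∉ T := hTe ▸ Set.notMem_empty x
      have hfx : f x < 0 := by
        by_contra hc
        exact this ⟨hxS, le_of_not_gt hc⟩
      calc f x < 0 := hfx
        _ ≤ 1 * g x := by simpa using hg0 x
    · obtain ⟨x₀, hx₀T, hmin⟩ := hTcpt.exists_isMinOn hTne hgc.continuousOn
      obtain ⟨x₁, hx₁T, hmax⟩ := hTcpt.exists_isMaxOn hTne hfc.continuousOn
      set δ := g x₀ with hδ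
      set F := f x₁ with hF
      have hδpos : 0 < δ := by
        rcases lt_or_eq_of_le (hg0 x₀) with h' | h'
        · exact h'
        · exfalso
          have hx₀ne : x₀ ≠ 0 := by
            intro h0
            have := hx₀T.1
            rw [h0] at this
            simp [hS] at this
          have := h x₀ hx₀ne (hgker x₀ h'.symm)
          exact absurd hx₀T.2 (by simpa using not_le.mpr this)
      have hFnn : 0 ≤ F := hx₁T.2
      refine ⟨F / δ + 1, by positivity, fun x hx => ?_⟩
      have hxS : x ∈ S := mem_sphere_zero_iff_norm.mpr hx
      by_cases hfx : 0 ≤ f x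
      · have hxT : x ∈ T := ⟨hxS, hfx⟩
        have h1 : f x ≤ F := hmax hxT
        have h2 : δ ≤ g x := hmin hxT
        have : (F / δ + 1) * δ = F + δ := by field_simp
        calc f x ≤ F := h1
          _ < F + δ := by linarith
          _ = (F / δ + 1) * δ := this.symm
          _ ≤ (F / δ + 1) * g x := by
              apply mul_le_mul_of_nonneg_left h2
              positivity
      · calc f x < 0 := not_le.mp hfx
          _ ≤ (F / δ + 1) * g x := by
              apply mul_nonneg (by positivity) (hg0 x)
  obtain ⟨ρ, hρpos, hbound⟩ := main
  refine ⟨ρ, hρpos, posDef_iff_dotProduct_mulVec.mpr ⟨?_, ?_⟩⟩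
  · show (((ρ:ℂ) • (B * Bᴴ)) - Q)ᴴ = _
    rw [conjTranspose_sub, conjTranspose_smul, conjTranspose_mul, conjTranspose_conjTranspose,
      hQ, RCLike.star_def, Complex.conj_ofReal]
  · intro x hx
    have hfgx : f x < ρ * g x := by
      set r : ℝ := ‖x‖ with hr
      have hrpos : 0 < r := by rw [hr]; exact norm_pos_iff.mpr hx
      set u : Fin n → ℂ := ((r⁻¹ : ℝ) : ℂ) • x with hu
      have hnu : ‖u‖ = 1 := by
        have hnc : ‖(((r⁻¹:ℝ)):ℂ)‖ = r⁻¹ := by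
          simp [abs_of_pos (inv_pos.mpr hrpos), hrpos.le]
        rw [hu, norm_smul, hnc, ← hr, inv_mul_cancel₀ hrpos.ne']
      have h1 := hbound u hnu
      have h2 : f u = (r⁻¹)^2 * f x := quad_scale Q r⁻¹ x
      have h3 : g u = (r⁻¹)^2 * g x := quad_scale (B * Bᴴ) r⁻¹ x
      rw [h2, h3] at h1
      have hrr : 0 < (r⁻¹)^2 := by positivity
      nlinarith [mul_pos hrr hrpos]
    have him : (star x ⬝ᵥ ((((ρ:ℂ) • (B * Bᴴ)) - Q) *ᵥ x)).im = 0 := by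
      apply herm_im
      rw [conjTranspose_sub, conjTranspose_smul, conjTranspose_mul, conjTranspose_conjTranspose,
        hQ, RCLike.star_def, Complex.conj_ofReal]
    have hre : (star x ⬝ᵥ ((((ρ:ℂ) • (B * Bᴴ)) - Q) *ᵥ x)).re = ρ * g x - f x := by
      rw [sub_mulVec, dotProduct_sub, smul_mulVec, dotProduct_smul, Complex.sub_re]
      simp only [smul_eq_mul, Complex.re_ofReal_mul]
      rfl
    rw [Complex.lt_def]
    constructor
    · rw [hre]
      simpa using sub_pos.mpr hfgx
    · simpa using him.symm



lemma construct {n q k : ℕ} (B : Matrix (Fin n) (Fin q) ℂ) (C : Matrix (Fin k) (Fin n) ℂ)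
    (Q : Matrix (Fin n) (Fin n) ℂ) (hQ : Qᴴ = Q)
    (hB : ∀ x : Fin n → ℂ, x ≠ 0 → Bᴴ *ᵥ x = 0 → (star x ⬝ᵥ (Q *ᵥ x)).re < 0)
    (hC : ∀ x : Fin n → ℂ, x ≠ 0 → C *ᵥ x = 0 → (star x ⬝ᵥ (Q *ᵥ x)).re < 0) :
    ∃ K : Matrix (Fin q) (Fin k) ℂ, ∀ x : Fin n → ℂ, x ≠ 0 →
      (star x ⬝ᵥ ((B * K * C + (B * K * C)ᴴ + Q) *ᵥ x)).re < 0 := by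
  obtain ⟨ρ, hρ, hD⟩ := finsler B Q hQ hB
  set D : Matrix (Fin n) (Fin n) ℂ := ((ρ:ℂ) • (B * Bᴴ)) - Q with hDdef
  set Φ : Matrix (Fin n) (Fin n) ℂ := D⁻¹ with hΦdef
  have hΦpd : Φ.PosDef := hD.inv
  have hΦH : Φᴴ = Φ := hD.isHermitian.inv
  have hdet : IsUnit D.det := (Matrix.isUnit_iff_isUnit_det D).mp hD.isUnit
  have hDΦ : D * Φ = 1 := Matrix.mul_nonsing_inv D hdet
  set H : Matrix (Fin k) (Fin k) ℂ := C * Φ * Cᴴ with hHdef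
  have hHsd : H.PosSemidef := hΦpd.posSemidef.mul_mul_conjTranspose_same C
  have hHH : Hᴴ = H := hHsd.isHermitian
  obtain ⟨P, hPH, hPsd, hHPH, hPHP⟩ := pinv_exists hHsd
  set J : Matrix (Fin n) (Fin n) ℂ := Cᴴ * P * C with hJdef
  have hJH : Jᴴ = J := by
    rw [hJdef]
    simp only [conjTranspose_mul, conjTranspose_conjTranspose, hPH, Matrix.mul_assoc]
  have hJsd : J.PosSemidef := hPsd.conjTranspose_mul_mul_same C
  -- H * P * C = C
  have hHPC : H * P * C = C := by
    set N : Matrix (Fin k) (Fin n) ℂ := C - H * P * C with hNdef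
    have hNT : Nᴴ = Cᴴ - Cᴴ * P * H := by
      rw [hNdef]
      simp only [conjTranspose_sub, conjTranspose_mul, hPH, hHH, Matrix.mul_assoc]
    have h1 : C * Φ * Nᴴ = 0 := by
      rw [hNT, Matrix.mul_sub]
      have e1 : C * Φ * (Cᴴ * P * H) = C * Φ * Cᴴ * P * H := by
        simp only [Matrix.mul_assoc]
      rw [e1, ← hHdef, hHPH, sub_self]
    have h2 : N * Φ * Nᴴ = 0 := by
      have e2 : N * Φ * Nᴴ = C * Φ * Nᴴ - H * P * (C * Φ * Nᴴ) := by
        rw [hNdef]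
        simp only [Matrix.sub_mul, Matrix.mul_assoc]
      rw [e2, h1, Matrix.mul_zero, sub_self]
    -- conclude N = 0
    have hN0 : N = 0 := by
      have hcol : ∀ v : Fin k → ℂ, Nᴴ *ᵥ v = 0 := by
        intro v
        by_contra hv
        have hpos := hΦpd.re_dotProduct_pos hv
        have : star (Nᴴ *ᵥ v) ⬝ᵥ (Φ *ᵥ (Nᴴ *ᵥ v)) = 0 := by
          rw [← dot_adj N v (Φ *ᵥ (Nᴴ *ᵥ v))]
          rw [mulVec_mulVec, mulVec_mulVec, h2, zero_mulVec, dotProduct_zero]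
        rw [RCLike.re_to_complex] at hpos
        rw [this] at hpos
        simp at hpos
      have : Nᴴ = 0 := by
        ext i j
        have := congrFun (hcol (Pi.single j 1)) i
        simpa [mulVec_single] using this
      calc N = Nᴴᴴ := (conjTranspose_conjTranspose N).symm
        _ = 0 := by rw [this, conjTranspose_zero]
    have := sub_eq_zero.mp (hNdef ▸ hN0)
    exact this.symm
  -- C * (Φ * J) = C
  have hCΦJ : C * (Φ * J) = C := by
    have e3 : C * (Φ * J) = C * Φ * Cᴴ * P * C := by
      rw [hJdef]; simp only [Matrix.mul_assoc]
    rw [e3, ← hHdef, hHPC]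
  -- the feedback gain
  set K : Matrix (Fin q) (Fin k) ℂ := (-(ρ:ℂ)) • (Bᴴ * Φ * Cᴴ * P) with hKdef
  have hDQ : (ρ:ℂ) • (B * Bᴴ) = D + Q := by rw [hDdef, sub_add_cancel]
  have h5 : B * K * C = -(J + Q * (Φ * J)) := by
    have e4 : B * K * C = (-(ρ:ℂ)) • ((B * Bᴴ) * (Φ * J)) := by
      rw [hKdef, hJdef]
      simp only [Matrix.mul_smul, Matrix.smul_mul, Matrix.mul_assoc]
    have e5 : D * (Φ * J) = J := by rw [← Matrix.mul_assoc, hDΦ, Matrix.one_mul]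
    rw [e4, neg_smul, ← smul_mul_assoc, hDQ, Matrix.add_mul, e5]
  -- key algebraic identity
  have key : B * K * C + (B * K * C)ᴴ + Q
      = (1 - Φ * J)ᴴ * Q * (1 - Φ * J)
        - (ρ:ℂ) • ((Bᴴ * (Φ * J))ᴴ * (Bᴴ * (Φ * J))) - J := by
    have hconjT : (1 - Φ * J)ᴴ = 1 - J * Φ := by
      simp only [conjTranspose_sub, conjTranspose_one, conjTranspose_mul, hJH, hΦH]
    have hT2 : (ρ:ℂ) • ((Bᴴ * (Φ * J))ᴴ * (Bᴴ * (Φ * J)))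
        = J + J * (Φ * (Q * (Φ * J))) := by
      have e6 : (Bᴴ * (Φ * J))ᴴ * (Bᴴ * (Φ * J)) = (J * Φ) * ((B * Bᴴ) * (Φ * J)) := by
        simp only [conjTranspose_mul, conjTranspose_conjTranspose, hJH, hΦH, Matrix.mul_assoc]
      have e7 : D * (Φ * J) = J := by rw [← Matrix.mul_assoc, hDΦ, Matrix.one_mul]
      have e8 : J * Φ * J = J := by
        have e9 : J * Φ * J = Cᴴ * P * (C * (Φ * J)) := by
          rw [hJdef]; simp only [Matrix.mul_assoc]
        rw [e9, hCΦJ, ← hJdef]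
      rw [e6, ← mul_smul_comm, ← smul_mul_assoc, hDQ, Matrix.add_mul, Matrix.mul_add, e7, e8]
      simp only [Matrix.mul_assoc]
    rw [h5, hconjT, hT2]
    have hconjBKC : (-(J + Q * (Φ * J)))ᴴ = -(J + J * (Φ * Q)) := by
      simp only [conjTranspose_neg, conjTranspose_add, conjTranspose_mul, hJH, hΦH, hQ,
        Matrix.mul_assoc]
    rw [hconjBKC]
    simp only [Matrix.sub_mul, Matrix.mul_sub, Matrix.one_mul, Matrix.mul_one, Matrix.mul_assoc]
    abel
  refine ⟨K, fun x hx => ?_⟩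
  set y : Fin n → ℂ := (1 - Φ * J) *ᵥ x with hy
  set w : Fin q → ℂ := (Bᴴ * (Φ * J)) *ᵥ x with hw
  have hsplit : star x ⬝ᵥ ((B * K * C + (B * K * C)ᴴ + Q) *ᵥ x)
      = star y ⬝ᵥ (Q *ᵥ y) - (ρ:ℂ) * (star w ⬝ᵥ w) - star x ⬝ᵥ (J *ᵥ x) := by
    rw [key, sub_mulVec, sub_mulVec, dotProduct_sub, dotProduct_sub, smul_mulVec,
      dotProduct_smul, smul_eq_mul]
    congr 2
    · have e10 : ((1 - Φ * J)ᴴ * Q * (1 - Φ * J)) *ᵥ x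
          = (1 - Φ * J)ᴴ *ᵥ (Q *ᵥ y) := by
        rw [hy, mulVec_mulVec, mulVec_mulVec]
      rw [e10, dot_adj, conjTranspose_conjTranspose, ← hy]
    · have e11 : ((Bᴴ * (Φ * J))ᴴ * (Bᴴ * (Φ * J))) *ᵥ x
          = (Bᴴ * (Φ * J))ᴴ *ᵥ w := by rw [hw, mulVec_mulVec]
      rw [e11, dot_adj, conjTranspose_conjTranspose, ← hw]
  have hCy : C *ᵥ y = 0 := by
    rw [hy, mulVec_mulVec, Matrix.mul_sub, Matrix.mul_one, hCΦJ, sub_self, zero_mulVec]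
  have hwre : 0 ≤ (star w ⬝ᵥ w).re := re_dot_self_nonneg w
  have hJre : 0 ≤ (star x ⬝ᵥ (J *ᵥ x)).re := by
    have := hJsd.re_dotProduct_nonneg x
    rwa [RCLike.re_to_complex] at this
  have hrefin : (star x ⬝ᵥ ((B * K * C + (B * K * C)ᴴ + Q) *ᵥ x)).re
      = (star y ⬝ᵥ (Q *ᵥ y)).re - ρ * (star w ⬝ᵥ w).re - (star x ⬝ᵥ (J *ᵥ x)).re := by
    rw [hsplit, Complex.sub_re, Complex.sub_re, Complex.re_ofReal_mul]
  rw [hrefin]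
  by_cases hy0 : y = 0
  · have hxx : (Φ * J) *ᵥ x = x := by
      have h0 : x - (Φ * J) *ᵥ x = 0 := by
        calc x - (Φ * J) *ᵥ x = (1 - Φ * J) *ᵥ x := by rw [sub_mulVec, one_mulVec]
          _ = y := hy.symm
          _ = 0 := hy0
      exact (sub_eq_zero.mp h0).symm
    have hJD : J *ᵥ x = D *ᵥ x := by
      conv_rhs => rw [← hxx]
      rw [mulVec_mulVec, ← Matrix.mul_assoc, hDΦ, Matrix.one_mul]
    have hDpos : 0 < (star x ⬝ᵥ (D *ᵥ x)).re := by
      have := hD.re_dotProduct_pos hx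
      rwa [RCLike.re_to_complex] at this
    have h0 : (star y ⬝ᵥ (Q *ᵥ y)).re = 0 := by
      rw [hy0]
      simp
    rw [h0, hJD]
    nlinarith
  · have hyQ : (star y ⬝ᵥ (Q *ᵥ y)).re < 0 := hC y hy0 hCy
    nlinarith


/-- Theorem 2.3.12 of Skelton et al.: existence of `K` with
`BKC + (BKC)* + Q` negative definite is equivalent to `Q` being negative definite
on the kernels of `B*` and of `C`, unless `BB*` (resp. `C*C`) is positive definite. -/
theorem dissipating_K_exists_iff {n q k : ℕ}
    (B : Matrix (Fin n) (Fin q) ℂ) (C : Matrix (Fin k) (Fin n) ℂ)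
    (Q : Matrix (Fin n) (Fin n) ℂ) (hQ : Qᴴ = Q) :
    (∃ K : Matrix (Fin q) (Fin k) ℂ,
        ∀ x : Fin n → ℂ, x ≠ 0 →
          (star x ⬝ᵥ ((B * K * C + (B * K * C)ᴴ + Q) *ᵥ x)).re < 0) ↔
      ((∀ x : Fin n → ℂ, x ≠ 0 → Bᴴ *ᵥ x = 0 → (star x ⬝ᵥ (Q *ᵥ x)).re < 0) ∨
          (B * Bᴴ).PosDef) ∧
        ((∀ x : Fin n → ℂ, x ≠ 0 → C *ᵥ x = 0 → (star x ⬝ᵥ (Q *ᵥ x)).re < 0) ∨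
          (Cᴴ * C).PosDef) := by
  constructor
  · rintro ⟨K, hK⟩
    constructor
    · left
      intro x hx hBx
      have hM := hK x hx
      have h1 : star x ⬝ᵥ ((B * K * C) *ᵥ x) = 0 := by
        have e : B * K * C = B * (K * C) := by rw [Matrix.mul_assoc]
        rw [e, ← mulVec_mulVec, dot_adj, hBx, star_zero, zero_dotProduct]
      have h2 : star x ⬝ᵥ ((B * K * C)ᴴ *ᵥ x) = 0 := by
        have : (B * K * C)ᴴ *ᵥ x = Cᴴ *ᵥ ((K)ᴴ *ᵥ (Bᴴ *ᵥ x)) := by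
          rw [conjTranspose_mul, conjTranspose_mul, mulVec_mulVec, mulVec_mulVec,
            Matrix.mul_assoc]
        rw [this, hBx, mulVec_zero, mulVec_zero, dotProduct_zero]
      rw [add_mulVec, add_mulVec, dotProduct_add, dotProduct_add, h1, h2] at hM
      simpa using hM
    · left
      intro x hx hCx
      have hM := hK x hx
      have h1 : star x ⬝ᵥ ((B * K * C) *ᵥ x) = 0 := by
        rw [← mulVec_mulVec, hCx, mulVec_zero, dotProduct_zero]
      have h2 : star x ⬝ᵥ ((B * K * C)ᴴ *ᵥ x) = 0 := by
        have e : (B * K * C)ᴴ = Cᴴ * (B * K)ᴴ := by rw [conjTranspose_mul]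
        rw [e, ← mulVec_mulVec, dot_adj, conjTranspose_conjTranspose, hCx, star_zero,
          zero_dotProduct]
      rw [add_mulVec, add_mulVec, dotProduct_add, dotProduct_add, h1, h2] at hM
      simpa using hM
  · rintro ⟨hB, hC⟩
    have hB' : ∀ x : Fin n → ℂ, x ≠ 0 → Bᴴ *ᵥ x = 0 → (star x ⬝ᵥ (Q *ᵥ x)).re < 0 := by
      rcases hB with hB | hB
      · exact hB
      · intro x hx hBx
        exfalso
        have hpos := hB.re_dotProduct_pos hx
        have : star x ⬝ᵥ ((B * Bᴴ) *ᵥ x) = 0 := by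
          rw [← mulVec_mulVec, hBx, mulVec_zero, dotProduct_zero]
        rw [RCLike.re_to_complex, this] at hpos
        simp at hpos
    have hC' : ∀ x : Fin n → ℂ, x ≠ 0 → C *ᵥ x = 0 → (star x ⬝ᵥ (Q *ᵥ x)).re < 0 := by
      rcases hC with hC | hC
      · exact hC
      · intro x hx hCx
        exfalso
        have hpos := hC.re_dotProduct_pos hx
        have : star x ⬝ᵥ ((Cᴴ * C) *ᵥ x) = 0 := by
          rw [← mulVec_mulVec, hCx, mulVec_zero, dotProduct_zero]
        rw [RCLike.re_to_complex, this] at hpos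
        simp at hpos
    exact construct B C Q hQ hB' hC'
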